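/- Let v, w ∈ ℂ²⊗ℂ² be orthonormal vectors such that the orthogonal projections P = vv* + ww* and P^C = I − P both have positive semidefinite partial transposes. If both v and w are written via coefficient matrices M_v, M_w, then it is not possible that exactly one of det M_v, det M_w is zero. (Equivalently: if the projector onto a 2-dimensional subspace of ℂ²⊗ℂ² spanned by one product vector and one entangled vector, then its partial transpose is not positive semidefinite.) -/

import Mathlib

noncomputable section

open scoped ComplexOrder

/-- The two-qubit Hilbert space ℂ² ⊗ ℂ², modeled as ℂ^(2×2) with the standard inner product. -/
abbrev TwoQubit : Type := EuclideanSpace ℂ (Fin 2 × Fin 2)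

/-- The computational basis vector |ab⟩. -/
def ket (a b : Fin 2) : TwoQubit := EuclideanSpace.single (a, b) 1

/-- A vector is a product vector if it is of the form u ⊗ w. -/
def IsProductVec (v : TwoQubit) : Prop :=
  ∃ u w : Fin 2 → ℂ, ∀ a b : Fin 2, v (a, b) = u a * w b

/-- The 2×2 coefficient matrix of a vector in ℂ² ⊗ ℂ². -/
def coeffMat (v : TwoQubit) : Matrix (Fin 2) (Fin 2) ℂ :=
  Matrix.of fun a b => v (a, b)

/-- Partial transpose (on the second tensor factor) of an operator on ℂ² ⊗ ℂ². -/
def ptrans (M : Matrix (Fin 2 × Fin 2) (Fin 2 × Fin 2) ℂ) :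
    Matrix (Fin 2 × Fin 2) (Fin 2 × Fin 2) ℂ :=
  Matrix.of fun p q => M (p.1, q.2) (q.1, p.2)

/-- The matrix of the orthogonal projection vv* + ww* onto span{v, w} (for orthonormal v, w). -/
def projMat (v w : TwoQubit) : Matrix (Fin 2 × Fin 2) (Fin 2 × Fin 2) ℂ :=
  Matrix.of fun p q => v p * star (v q) + w p * star (w q)

/-- `M` has a strictly negative (real) eigenvalue. -/
def HasNegEig (M : Matrix (Fin 2 × Fin 2) (Fin 2 × Fin 2) ℂ) : Prop :=
  ∃ c : ℝ, c < 0 ∧ ∃ x : (Fin 2 × Fin 2) → ℂ, x ≠ 0 ∧ M.mulVec x = (c : ℂ) • x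

/-- An operator on ℂ² ⊗ ℂ² is separable if it is a finite sum of Kronecker products of
positive semidefinite operators. -/
def SeparableOp (M : Matrix (Fin 2 × Fin 2) (Fin 2 × Fin 2) ℂ) : Prop :=
  ∃ (n : ℕ) (A B : Fin n → Matrix (Fin 2) (Fin 2) ℂ),
    (∀ i, (A i).PosSemidef) ∧ (∀ i, (B i).PosSemidef) ∧
    M = ∑ i, Matrix.kroneckerMap (· * ·) (A i) (B i)

section Aux

open Matrix

/-- A PSD complex matrix with zero trace is zero. -/
lemma psd_trace_zero {n : Type*} [Fintype n] [DecidableEq n]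
    {M : Matrix n n ℂ} (hM : M.PosSemidef) (h : M.trace = 0) : M = 0 := by
  obtain ⟨S, hH, hS⟩ : ∃ S : Matrix n n ℂ, S.IsHermitian ∧ S * S = M :=
    open scoped MatrixOrder in
      ⟨CFC.sqrt M, (CFC.sqrt_nonneg M).posSemidef.isHermitian, CFC.sqrt_mul_sqrt_self M hM.nonneg⟩
  have htr : M.trace = ((∑ i, ∑ j, Complex.normSq (S i j) : ℝ) : ℂ) := by
    rw [← hS]
    push_cast
    simp only [Matrix.trace, Matrix.diag, Matrix.mul_apply]
    refine Finset.sum_congr rfl fun i _ => Finset.sum_congr rfl fun j _ => ?_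
    rw [← hH.apply j i, Complex.star_def, Complex.mul_conj]
  rw [h] at htr
  have h0 : (∑ i, ∑ j, Complex.normSq (S i j) : ℝ) = 0 := by exact_mod_cast htr.symm
  have hz : ∀ i j, S i j = 0 := by
    intro i j
    have h1 : ∀ i ∈ (Finset.univ : Finset n),
        (0:ℝ) ≤ ∑ j, Complex.normSq (S i j) :=
      fun i _ => Finset.sum_nonneg fun j _ => Complex.normSq_nonneg _
    have h2 := (Finset.sum_eq_zero_iff_of_nonneg h1).mp h0 i (Finset.mem_univ i)
    have h3 := (Finset.sum_eq_zero_iff_of_nonneg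
      (fun j _ => Complex.normSq_nonneg (S i j))).mp h2 j (Finset.mem_univ j)
    exact Complex.normSq_eq_zero.mp h3
  have hS0 : S = 0 := by ext i j; exact hz i j
  rw [← hS, hS0, mul_zero]

lemma ptrans_one_sub (M : Matrix (Fin 2 × Fin 2) (Fin 2 × Fin 2) ℂ) :
    ptrans (1 - M) = 1 - ptrans M := by
  ext p q
  have h : (p.1 = q.1 ∧ q.2 = p.2) ↔ p = q := by
    rw [Prod.ext_iff]
    exact ⟨fun ⟨h1, h2⟩ => ⟨h1, h2.symm⟩, fun ⟨h1, h2⟩ => ⟨h1, h2.symm⟩⟩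
  simp [ptrans, Matrix.sub_apply, Matrix.one_apply, Prod.mk.injEq, h]

lemma trace_ptrans (M : Matrix (Fin 2 × Fin 2) (Fin 2 × Fin 2) ℂ) :
    (ptrans M).trace = M.trace := rfl

lemma trace_ptrans_sq (M : Matrix (Fin 2 × Fin 2) (Fin 2 × Fin 2) ℂ) :
    (ptrans M * ptrans M).trace = (M * M).trace := by
  simp only [Matrix.trace, Matrix.diag, Matrix.mul_apply, ptrans, Matrix.of_apply,
    Fintype.sum_prod_type, Fin.sum_univ_two]
  ring

lemma inner_sums (v w : TwoQubit) (hv : ‖v‖ = 1) (hw : ‖w‖ = 1)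
    (hvw : inner ℂ v w = (0 : ℂ)) :
    (∑ p : Fin 2 × Fin 2, star (v p) * v p) = 1 ∧
    (∑ p : Fin 2 × Fin 2, star (w p) * w p) = 1 ∧
    (∑ p : Fin 2 × Fin 2, star (v p) * w p) = 0 ∧
    (∑ p : Fin 2 × Fin 2, star (w p) * v p) = 0 := by
  have h1 : (inner ℂ v v : ℂ) = 1 := by
    rw [inner_self_eq_norm_sq_to_K, hv]; norm_num
  have h2 : (inner ℂ w w : ℂ) = 1 := by
    rw [inner_self_eq_norm_sq_to_K, hw]; norm_num
  have h4 : (inner ℂ w v : ℂ) = 0 := inner_eq_zero_symm.mp hvw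
  simp only [PiLp.inner_apply, RCLike.inner_apply, starRingEnd_apply] at h1 h2 hvw h4
  exact ⟨(Finset.sum_congr rfl fun p _ => mul_comm _ _).trans h1,
    (Finset.sum_congr rfl fun p _ => mul_comm _ _).trans h2,
    (Finset.sum_congr rfl fun p _ => mul_comm _ _).trans hvw,
    (Finset.sum_congr rfl fun p _ => mul_comm _ _).trans h4⟩

lemma proj_idem (v w : TwoQubit) (hv : ‖v‖ = 1) (hw : ‖w‖ = 1)
    (hvw : inner ℂ v w = (0 : ℂ)) :
    projMat v w * projMat v w = projMat v w := by
  obtain ⟨h1, h2, h3, h4⟩ := inner_sums v w hv hw hvw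
  simp only [Fintype.sum_prod_type, Fin.sum_univ_two] at h1 h2 h3 h4
  ext p q
  simp only [Matrix.mul_apply, projMat, Matrix.of_apply, Fintype.sum_prod_type,
    Fin.sum_univ_two]
  linear_combination (v p * star (v q)) * h1 + (w p * star (w q)) * h2 +
    (v p * star (w q)) * h3 + (w p * star (v q)) * h4

lemma trace_proj (v w : TwoQubit) (hv : ‖v‖ = 1) (hw : ‖w‖ = 1)
    (hvw : inner ℂ v w = (0 : ℂ)) : (projMat v w).trace = 2 := by
  obtain ⟨h1, h2, _, _⟩ := inner_sums v w hv hw hvw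
  simp only [Fintype.sum_prod_type, Fin.sum_univ_two] at h1 h2
  simp only [Matrix.trace, Matrix.diag, projMat, Matrix.of_apply, Fintype.sum_prod_type,
    Fin.sum_univ_two]
  linear_combination h1 + h2

lemma Q_idem (v w : TwoQubit) (hv : ‖v‖ = 1) (hw : ‖w‖ = 1)
    (hvw : inner ℂ v w = (0 : ℂ))
    (hP : (ptrans (projMat v w)).PosSemidef)
    (hPC : (ptrans (1 - projMat v w)).PosSemidef) :
    ptrans (projMat v w) * ptrans (projMat v w) = ptrans (projMat v w) := by
  set Q := ptrans (projMat v w) with hQdef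
  have h1Q : (1 - Q).PosSemidef := by
    rw [← ptrans_one_sub]; exact hPC
  have htrQQ : (Q * Q).trace = Q.trace := by
    rw [hQdef, trace_ptrans_sq, proj_idem v w hv hw hvw, trace_ptrans]
  obtain ⟨S, hH, hS⟩ : ∃ S : Matrix (Fin 2 × Fin 2) (Fin 2 × Fin 2) ℂ,
      Sᴴ = S ∧ S * S = Q :=
    open scoped MatrixOrder in
      ⟨CFC.sqrt Q, (CFC.sqrt_nonneg Q).posSemidef.isHermitian, CFC.sqrt_mul_sqrt_self Q hP.nonneg⟩
  have hDpsd : (Q - Q * Q).PosSemidef := by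
    have key : S * (1 - Q) * Sᴴ = Q - Q * Q := by
      rw [hH, ← hS]; noncomm_ring
    rw [← key]
    exact h1Q.mul_mul_conjTranspose_same S
  have hDtr : (Q - Q * Q).trace = 0 := by
    rw [Matrix.trace_sub, htrQQ, sub_self]
  have hD0 : Q - Q * Q = 0 := psd_trace_zero hDpsd hDtr
  have := sub_eq_zero.mp hD0
  exact this.symm

lemma prod_decomp (v : TwoQubit) (h : (coeffMat v).det = 0) :
    ∃ u x : Fin 2 → ℂ, ∀ a b : Fin 2, v (a, b) = u a * x b := by
  have hd : v (0,0) * v (1,1) - v (0,1) * v (1,0) = 0 := by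
    simpa [Matrix.det_fin_two, coeffMat] using h
  rcases eq_or_ne (v (0,0)) 0 with h00 | h00
  · rcases eq_or_ne (v (0,1)) 0 with h01 | h01
    · refine ⟨![0, 1], ![v (1,0), v (1,1)], ?_⟩
      intro a b
      fin_cases a <;> fin_cases b
      · show v (0,0) = 0 * v (1,0); rw [zero_mul]; exact h00
      · show v (0,1) = 0 * v (1,1); rw [zero_mul]; exact h01
      · show v (1,0) = 1 * v (1,0); rw [one_mul]
      · show v (1,1) = 1 * v (1,1); rw [one_mul]
    · have h10 : v (1,0) = 0 := by
        have hm : v (0,1) * v (1,0) = 0 := by linear_combination -hd + v (1,1) * h00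
        rcases mul_eq_zero.mp hm with h | h
        · exact absurd h h01
        · exact h
      refine ⟨![v (0,1), v (1,1)], ![0, 1], ?_⟩
      intro a b
      fin_cases a <;> fin_cases b
      · show v (0,0) = v (0,1) * 0; rw [mul_zero]; exact h00
      · show v (0,1) = v (0,1) * 1; rw [mul_one]
      · show v (1,0) = v (1,1) * 0; rw [mul_zero]; exact h10
      · show v (1,1) = v (1,1) * 1; rw [mul_one]
  · have h11 : v (1,1) = v (1,0) * v (0,1) / v (0,0) := by
      rw [eq_div_iff h00]; linear_combination hd
    refine ⟨![v (0,0), v (1,0)], ![1, v (0,1) / v (0,0)], ?_⟩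
    intro a b
    fin_cases a <;> fin_cases b
    · show v (0,0) = v (0,0) * 1; rw [mul_one]
    · show v (0,1) = v (0,0) * (v (0,1) / v (0,0))
      rw [← mul_div_assoc, mul_div_cancel_left₀ _ h00]
    · show v (1,0) = v (1,0) * 1; rw [mul_one]
    · show v (1,1) = v (1,0) * (v (0,1) / v (0,0))
      rw [← mul_div_assoc]; exact h11

lemma ptrans_outer_injective (w : TwoQubit) (hdw : (coeffMat w).det ≠ 0)
    (y : (Fin 2 × Fin 2) → ℂ)
    (hy : (ptrans (Matrix.of fun p q => w p * star (w q))).mulVec y = 0) : y = 0 := by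
  set N : Matrix (Fin 2) (Fin 2) ℂ := Matrix.of fun c b => star (w (c, b)) with hN
  set X : Matrix (Fin 2) (Fin 2) ℂ := Matrix.of fun d c => y (c, d) with hX
  have hMN : coeffMat w * (X * N) = 0 := by
    ext a b
    have hyp := congrFun hy (a, b)
    simp only [Matrix.mulVec, dotProduct, ptrans, Matrix.of_apply,
      Fintype.sum_prod_type, Fin.sum_univ_two, Pi.zero_apply] at hyp
    simp only [Matrix.mul_apply, hN, hX, coeffMat, Matrix.of_apply, Fin.sum_univ_two,
      Matrix.zero_apply]
    linear_combination hyp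
  have hdN : N.det ≠ 0 := by
    have hsd : N.det = star ((coeffMat w).det) := by
      simp only [Matrix.det_fin_two, hN, coeffMat, Matrix.of_apply, star_sub, StarMul.star_mul]
      ring
    rw [hsd]
    exact star_ne_zero.mpr hdw
  have hXN : X * N = 0 := by
    have h1 : (coeffMat w)⁻¹ * (coeffMat w * (X * N)) = 0 := by rw [hMN, Matrix.mul_zero]
    rwa [← Matrix.mul_assoc, Matrix.nonsing_inv_mul _ (Ne.isUnit hdw), Matrix.one_mul] at h1
  have hX0 : X = 0 := by
    have h1 : X * N * N⁻¹ = 0 := by rw [hXN, Matrix.zero_mul]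
    rwa [Matrix.mul_assoc, Matrix.mul_nonsing_inv _ (Ne.isUnit hdN), Matrix.mul_one] at h1
  funext p
  have := congrFun (congrFun hX0 p.2) p.1
  simpa [hX] using this

lemma key_contradiction (v w : TwoQubit) (hv : ‖v‖ = 1) (hw : ‖w‖ = 1)
    (hvw : inner ℂ v w = (0 : ℂ))
    (hP : (ptrans (projMat v w)).PosSemidef)
    (hPC : (ptrans (1 - projMat v w)).PosSemidef)
    (hdv : (coeffMat v).det = 0) (hdw : (coeffMat w).det ≠ 0) : False := by
  classical
  set Q := ptrans (projMat v w) with hQdef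
  set A := ptrans (Matrix.of fun p q => v p * star (v q)) with hAdef
  set B := ptrans (Matrix.of fun p q => w p * star (w q)) with hBdef
  have hQQ : Q * Q = Q := Q_idem v w hv hw hvw hP hPC
  have hQAB : Q = A + B := by
    ext p q
    simp [hQdef, hAdef, hBdef, ptrans, projMat]
  -- A has rank at most 1
  obtain ⟨u, x, hux⟩ := prod_decomp v hdv
  have hA : A = Matrix.vecMulVec (fun p : Fin 2 × Fin 2 => u p.1 * star (x p.2))
      (star fun p : Fin 2 × Fin 2 => u p.1 * star (x p.2)) := by
    ext p q
    have h1 : v (p.1, q.2) = u p.1 * x q.2 := hux p.1 q.2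
    have h2 : v (q.1, p.2) = u q.1 * x p.2 := hux q.1 p.2
    simp only [hAdef, ptrans, Matrix.of_apply, Matrix.vecMulVec_apply, Pi.star_apply,
      h1, h2, StarMul.star_mul, star_star]
    ring
  have hArank : A.rank ≤ 1 := by
    rw [hA, Matrix.vecMulVec_eq (Fin 1)]
    refine le_trans (Matrix.rank_mul_le_left _ _) ?_
    refine le_trans (Matrix.rank_le_card_width _) ?_
    simp
  -- Q has rank 2
  set qL := Q.mulVecLin with hqL
  set aL := A.mulVecLin with haL
  have hfull : Module.finrank ℂ ((Fin 2 × Fin 2) → ℂ) = 4 := by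
    rw [Module.finrank_fintype_fun_eq_card]; simp
  have hidem : qL ∘ₗ qL = qL := by rw [hqL, ← Matrix.mulVecLin_mul, hQQ]
  have hproj : LinearMap.IsProj (LinearMap.range qL) qL := by
    constructor
    · exact fun z => LinearMap.mem_range_self qL z
    · rintro z ⟨y, rfl⟩
      exact DFunLike.congr_fun hidem y
  have htrq : LinearMap.trace ℂ _ qL = Matrix.trace Q := by
    rw [LinearMap.trace_eq_matrix_trace ℂ (Pi.basisFun ℂ (Fin 2 × Fin 2)) qL,
      LinearMap.toMatrix_eq_toMatrix', hqL, ← Matrix.toLin'_apply', LinearMap.toMatrix'_toLin']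
  have htrQ2 : Matrix.trace Q = 2 := by
    rw [hQdef, trace_ptrans, trace_proj v w hv hw hvw]
  have hrange : Module.finrank ℂ (LinearMap.range qL) = 2 := by
    have hc : (Module.finrank ℂ (LinearMap.range qL) : ℂ) = 2 := by
      rw [← hproj.trace, htrq, htrQ2]
    exact_mod_cast hc
  have hrn := LinearMap.finrank_range_add_finrank_ker qL
  rw [hfull, hrange] at hrn
  have hkerQ : Module.finrank ℂ (LinearMap.ker qL) = 2 := by omega
  -- kernel of A has dimension at least 3
  have hrnA := LinearMap.finrank_range_add_finrank_ker aL
  rw [hfull] at hrnA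
  have hrangeA : Module.finrank ℂ (LinearMap.range aL) ≤ 1 := hArank
  have hkerA : 3 ≤ Module.finrank ℂ (LinearMap.ker aL) := by omega
  -- the kernels intersect nontrivially
  have hsum := Submodule.finrank_sup_add_finrank_inf_eq (LinearMap.ker qL) (LinearMap.ker aL)
  have hsup : Module.finrank ℂ ↥(LinearMap.ker qL ⊔ LinearMap.ker aL) ≤ 4 :=
    le_trans (Submodule.finrank_le _) (le_of_eq hfull)
  have hinf : 1 ≤ Module.finrank ℂ ↥(LinearMap.ker qL ⊓ LinearMap.ker aL) := by omega
  have hne : (LinearMap.ker qL ⊓ LinearMap.ker aL) ≠ ⊥ := by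
    intro hbot
    rw [hbot, finrank_bot] at hinf
    omega
  obtain ⟨z, hz, hz0⟩ := Submodule.exists_mem_ne_zero_of_ne_bot hne
  obtain ⟨hzQ, hzA⟩ := Submodule.mem_inf.mp hz
  have hzQ' : Q.mulVec z = 0 := hzQ
  have hzA' : A.mulVec z = 0 := hzA
  have hzB : B.mulVec z = 0 := by
    have := congrArg (fun M => Matrix.mulVec M z) hQAB
    simp only [Matrix.add_mulVec, hzQ', hzA', zero_add] at this
    exact this.symm
  exact hz0 (ptrans_outer_injective w hdw z hzB)

lemma projMat_comm (v w : TwoQubit) : projMat v w = projMat w v := by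
  ext p q; simp [projMat]; ring


end Aux

/-- If v, w are orthonormal and both the partial transpose of P = vv* + ww* and of
I − P are positive semidefinite, then it cannot be that exactly one of det M_v,
det M_w vanishes (i.e. the span of one product and one entangled vector is NPT). -/
theorem stmt19 (v w : TwoQubit) (hv : ‖v‖ = 1) (hw : ‖w‖ = 1)
    (hvw : inner ℂ v w = (0 : ℂ))
    (hP : (ptrans (projMat v w)).PosSemidef)
    (hPC : (ptrans (1 - projMat v w)).PosSemidef) :
    ¬ Xor' ((coeffMat v).det = 0) ((coeffMat w).det = 0) := by
  rintro (⟨hdv, hdw⟩ | ⟨hdw, hdv⟩)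
  · exact key_contradiction v w hv hw hvw hP hPC hdv hdw
  · have hwv : inner ℂ w v = (0 : ℂ) := inner_eq_zero_symm.mp hvw
    rw [projMat_comm v w] at hP hPC
    exact key_contradiction w v hw hv hwv hP hPC hdw hdv
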